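/- arXiv:1311.4599 — 3 statements merged into one kernel-verified Lean document; each statement's English description precedes it below -/
import Mathlib

section
/- Let I ⊆ R be a monomial ideal with linear quotients with respect to the ordered generators G(I) = (m_1,…,m_k), and suppose its decomposition function b is regular. Then for every m ∈ G(I) and all s, t ∈ set(m) one has b(x_s · b(x_t · m)) = b(x_t · b(x_s · m)). -/
open MvPolynomial

/-- The monomial ideal generated by a set of exponent vectors. -/
noncomputable def genIdeal (K : Type*) [Field K] {n : ℕ} (ms : Set (Fin n →₀ ℕ)) :
    Ideal (MvPolynomial (Fin n) K) :=
  Ideal.span ((fun u => MvPolynomial.monomial u (1 : K)) '' ms)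

/-- The colon ideal `⟨m_1, …, m_{j-1}⟩ : m_j`. -/
noncomputable def colonJ (K : Type*) [Field K] {n k : ℕ} (m : Fin k → (Fin n →₀ ℕ))
    (j : Fin k) : Ideal (MvPolynomial (Fin n) K) :=
  Submodule.colon (genIdeal K {u | ∃ i : Fin k, i < j ∧ u = m i})
    (Ideal.span {MvPolynomial.monomial (m j) (1 : K)})

/-- `I` has linear quotients w.r.t. the ordering `m_1,…,m_k` of its generators:
each colon ideal is generated by a subset of the variables. -/
def HasLinearQuotients (K : Type*) [Field K] {n k : ℕ}
    (m : Fin k → (Fin n →₀ ℕ)) : Prop :=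
  ∀ j : Fin k, ∃ S : Set (Fin n),
    colonJ K m j = Ideal.span ((fun s => (MvPolynomial.X s : MvPolynomial (Fin n) K)) '' S)

/-- `set(m_j) = {i : x_i ∈ ⟨m_1,…,m_{j-1}⟩ : m_j}`. -/
def mset (K : Type*) [Field K] {n k : ℕ} (m : Fin k → (Fin n →₀ ℕ)) (j : Fin k) :
    Set (Fin n) :=
  {t | (MvPolynomial.X t : MvPolynomial (Fin n) K) ∈ colonJ K m j}

/-- The `m i` are minimal monomial generators: none divides another. -/
def MinimalGens {n k : ℕ} (m : Fin k → (Fin n →₀ ℕ)) : Prop :=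
  ∀ i j : Fin k, m i ≤ m j → i = j

/-- `b` is the decomposition function: for a monomial `u ∈ I`, `b u` is the smallest
index `j` with `u ∈ ⟨m_1,…,m_j⟩`. -/
def IsDecompositionFunction (K : Type*) [Field K] {n k : ℕ}
    (m : Fin k → (Fin n →₀ ℕ)) (b : (Fin n →₀ ℕ) → Fin k) : Prop :=
  ∀ u : Fin n →₀ ℕ, MvPolynomial.monomial u (1 : K) ∈ genIdeal K (Set.range m) →
    (MvPolynomial.monomial u (1 : K) ∈ genIdeal K {v | ∃ i : Fin k, i ≤ b u ∧ v = m i}) ∧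
    (∀ j : Fin k,
      MvPolynomial.monomial u (1 : K) ∈ genIdeal K {v | ∃ i : Fin k, i ≤ j ∧ v = m i} →
      b u ≤ j)

/-- The decomposition function is regular: `set(b(x_t·m)) ⊆ set(m)` for every
generator `m` and every `t ∈ set(m)`. -/
def IsRegularDecomp (K : Type*) [Field K] {n k : ℕ}
    (m : Fin k → (Fin n →₀ ℕ)) (b : (Fin n →₀ ℕ) → Fin k) : Prop :=
  ∀ j : Fin k, ∀ t ∈ mset K m j,
    mset K m (b (m j + Finsupp.single t 1)) ⊆ mset K m j

lemma mem_genIdeal_iff (K : Type*) [Field K] {n : ℕ} (S : Set (Fin n →₀ ℕ))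
    (u : Fin n →₀ ℕ) :
    MvPolynomial.monomial u (1 : K) ∈ genIdeal K S ↔ ∃ v ∈ S, v ≤ u := by
  unfold genIdeal
  rw [MvPolynomial.mem_ideal_span_monomial_image]
  simp [MvPolynomial.support_monomial]

lemma mem_colonJ_iff (K : Type*) [Field K] {n k : ℕ} (m : Fin k → (Fin n →₀ ℕ))
    (j : Fin k) (v : Fin n →₀ ℕ) :
    MvPolynomial.monomial v (1 : K) ∈ colonJ K m j ↔
      ∃ i : Fin k, i < j ∧ m i ≤ v + m j := by
  unfold colonJ
  rw [Ideal.mem_colon_span_singleton, MvPolynomial.monomial_mul, one_mul,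
    mem_genIdeal_iff]
  constructor
  · rintro ⟨w, ⟨i, hi, rfl⟩, hle⟩; exact ⟨i, hi, hle⟩
  · rintro ⟨i, hi, hle⟩; exact ⟨m i, ⟨i, hi, rfl⟩, hle⟩

lemma mem_mset_iff (K : Type*) [Field K] {n k : ℕ} (m : Fin k → (Fin n →₀ ℕ))
    (j : Fin k) (t : Fin n) :
    t ∈ mset K m j ↔ ∃ i : Fin k, i < j ∧ m i ≤ m j + Finsupp.single t 1 := by
  have : (MvPolynomial.X t : MvPolynomial (Fin n) K) =
      MvPolynomial.monomial (Finsupp.single t 1) (1 : K) := by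
    rw [MvPolynomial.X, MvPolynomial.monomial]
  rw [mset, Set.mem_setOf_eq, this, mem_colonJ_iff]
  simp [add_comm]


/-- Key consequence of linear quotients: if some earlier generator divides `x^v · m_j`,
then some variable in the support of `v` lies in `set(m_j)`. -/
lemma lq_key (K : Type*) [Field K] {n k : ℕ} {m : Fin k → (Fin n →₀ ℕ)}
    (hlq : HasLinearQuotients K m) (j : Fin k) (v : Fin n →₀ ℕ)
    (h : ∃ i : Fin k, i < j ∧ m i ≤ v + m j) :
    ∃ r : Fin n, v r ≠ 0 ∧ r ∈ mset K m j := by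
  obtain ⟨S, hS⟩ := hlq j
  have hv : MvPolynomial.monomial v (1 : K) ∈ colonJ K m j := (mem_colonJ_iff K m j v).2 h
  rw [hS, MvPolynomial.mem_ideal_span_X_image] at hv
  obtain ⟨r, hrS, hr⟩ := hv v (by simp [MvPolynomial.support_monomial])
  refine ⟨r, hr, ?_⟩
  show (MvPolynomial.X r : MvPolynomial (Fin n) K) ∈ colonJ K m j
  rw [hS]
  exact Ideal.subset_span ⟨r, hrS, rfl⟩


lemma b_min (K : Type*) [Field K] {n k : ℕ} {m : Fin k → (Fin n →₀ ℕ)}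
    {b : (Fin n →₀ ℕ) → Fin k} (hb : IsDecompositionFunction K m b)
    {u : Fin n →₀ ℕ} {i : Fin k} (h : m i ≤ u) : b u ≤ i := by
  have hu : MvPolynomial.monomial u (1 : K) ∈ genIdeal K (Set.range m) :=
    (mem_genIdeal_iff K _ u).2 ⟨m i, ⟨i, rfl⟩, h⟩
  exact (hb u hu).2 i ((mem_genIdeal_iff K _ u).2 ⟨m i, ⟨i, le_refl i, rfl⟩, h⟩)

lemma b_dvd (K : Type*) [Field K] {n k : ℕ} {m : Fin k → (Fin n →₀ ℕ)}
    {b : (Fin n →₀ ℕ) → Fin k} (hb : IsDecompositionFunction K m b)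
    {u : Fin n →₀ ℕ} {i : Fin k} (h : m i ≤ u) : m (b u) ≤ u := by
  have hu : MvPolynomial.monomial u (1 : K) ∈ genIdeal K (Set.range m) :=
    (mem_genIdeal_iff K _ u).2 ⟨m i, ⟨i, rfl⟩, h⟩
  obtain ⟨v, ⟨i', hi', rfl⟩, hle⟩ := (mem_genIdeal_iff K _ u).1 (hb u hu).1
  have : b u = i' := le_antisymm (b_min K hb hle) hi'
  rwa [this]


/-- Main combinatorial lemma: `b(x_s · b(x_t · m_j)) = b(x_s x_t m_j)`. -/
lemma main_lemma (K : Type*) [Field K] {n k : ℕ} {m : Fin k → (Fin n →₀ ℕ)}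
    (hlq : HasLinearQuotients K m) {b : (Fin n →₀ ℕ) → Fin k}
    (hb : IsDecompositionFunction K m b) (hreg : IsRegularDecomp K m b)
    (j : Fin k) (s t : Fin n) :
    b (m (b (m j + Finsupp.single t 1)) + Finsupp.single s 1) =
      b (m j + Finsupp.single s 1 + Finsupp.single t 1) := by
  set et := Finsupp.single t 1 with het
  set es := Finsupp.single s 1 with hes
  set j1 := b (m j + et) with hj1
  have hj1d : m j1 ≤ m j + et := b_dvd K hb (le_add_right le_rfl)
  obtain ⟨w, hw⟩ : ∃ w, m j + et = m j1 + w := le_iff_exists_add.1 hj1d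
  set j2 := b (m j1 + es) with hj2
  have hj2d : m j2 ≤ m j1 + es := b_dvd K hb (le_add_right le_rfl)
  set c := b (m j + es + et) with hc
  have hcd : m c ≤ m j + es + et := b_dvd K hb (le_add_right (le_add_right le_rfl))
  have heq : m j + es + et = m j1 + (es + w) := by
    rw [add_right_comm, hw, add_assoc, add_comm w es]
  -- c ≤ j2
  have hc_le : c ≤ j2 := by
    apply b_min K hb
    calc m j2 ≤ m j1 + es := hj2d
      _ ≤ m j + es + et := by rw [heq]; exact add_le_add_right (le_add_right le_rfl) _
  -- the hard direction : j2 ≤ c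
  have hW : ∀ r : Fin n, w r ≠ 0 → r ∉ mset K m j1 := by
    intro r hr hmem
    obtain ⟨i, hij1, hile⟩ := (mem_mset_iff K m j1 r).1 hmem
    have hrw : Finsupp.single r 1 ≤ w := by
      rw [Finsupp.single_le_iff]; omega
    have : m i ≤ m j + et := by
      calc m i ≤ m j1 + Finsupp.single r 1 := hile
        _ ≤ m j1 + w := add_le_add_right hrw _
        _ = m j + et := hw.symm
    exact absurd (b_min K hb this) (not_le.2 hij1)
  have hj2_le : j2 ≤ c := by
    by_contra hlt
    push_neg at hlt
    -- m c does not divide m j1 + es (else b_min gives j2 ≤ c)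
    have hnd : ¬ m c ≤ m j1 + es := fun h => absurd (b_min K hb h) (not_le.2 hlt)
    have hc_lt_j1 : c < j1 := by
      have h1 : c ≤ j1 := b_min K hb (by rw [heq]; exact le_add_right le_rfl)
      rcases lt_or_eq_of_le h1 with h | h
      · exact h
      · exact absurd (h ▸ (le_add_right le_rfl : m j1 ≤ m j1 + es)) hnd
    -- linear quotients at j1
    obtain ⟨r, hr, hrset⟩ := lq_key K hlq j1 (es + w)
      ⟨c, hc_lt_j1, by rw [add_comm (es + w) (m j1), ← heq]; exact hcd⟩
    have hrs : r = s := by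
      by_contra hne
      have : w r ≠ 0 := by
        have := hr
        simp only [Finsupp.add_apply, hes, Finsupp.single_apply] at this
        simpa [Ne.symm hne] using this
      exact hW r this hrset
    -- so s ∈ set(j1), hence j2 < j1 and regularity applies
    have hsset : s ∈ mset K m j1 := hrs ▸ hrset
    obtain ⟨i, hij1, hile⟩ := (mem_mset_iff K m j1 s).1 hsset
    have hj2_lt_j1 : j2 < j1 := lt_of_le_of_lt (b_min K hb (hes ▸ hile)) hij1
    obtain ⟨w2, hw2⟩ : ∃ w2, m j1 + es = m j2 + w2 := le_iff_exists_add.1 hj2d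
    have hreg2 : mset K m j2 ⊆ mset K m j1 := hreg j1 s hsset
    -- linear quotients at j2
    obtain ⟨r2, hr2, hr2set⟩ := lq_key K hlq j2 (w2 + w) ⟨c, hlt, by
      have : m j + es + et = m j2 + (w2 + w) := by
        rw [heq, ← add_assoc, hw2, add_assoc]
      rw [add_comm (w2 + w) (m j2), ← this]; exact hcd⟩
    have hr2' : w2 r2 ≠ 0 ∨ w r2 ≠ 0 := by
      by_contra hcon
      push_neg at hcon
      apply hr2
      simp [Finsupp.add_apply, hcon.1, hcon.2]
    rcases hr2' with h2 | h2
    · -- contradiction with minimality of j2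
      obtain ⟨i2, hi2, hi2le⟩ := (mem_mset_iff K m j2 r2).1 hr2set
      have hrw2 : Finsupp.single r2 1 ≤ w2 := by rw [Finsupp.single_le_iff]; omega
      have : m i2 ≤ m j1 + es := by
        calc m i2 ≤ m j2 + Finsupp.single r2 1 := hi2le
          _ ≤ m j2 + w2 := add_le_add_right hrw2 _
          _ = m j1 + es := hw2.symm
      exact absurd (b_min K hb this) (not_le.2 hi2)
    · exact hW r2 h2 (hreg2 hr2set)
  exact le_antisymm hj2_le hc_le

/-- if `I` has linear quotients and a regular decomposition function `b`,
then `b(x_s · b(x_t · m)) = b(x_t · b(x_s · m))` for all `m ∈ G(I)` and `s, t ∈ set(m)`. -/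
theorem stmt0 (K : Type*) [Field K] {n k : ℕ} (m : Fin k → (Fin n →₀ ℕ))
    (hmin : MinimalGens m) (hlq : HasLinearQuotients K m)
    (b : (Fin n →₀ ℕ) → Fin k) (hb : IsDecompositionFunction K m b)
    (hreg : IsRegularDecomp K m b)
    (j : Fin k) (s t : Fin n) (hs : s ∈ mset K m j) (ht : t ∈ mset K m j) :
    m (b (m (b (m j + Finsupp.single t 1)) + Finsupp.single s 1)) =
      m (b (m (b (m j + Finsupp.single s 1)) + Finsupp.single t 1)) := by
  rw [main_lemma K hlq hb hreg j s t, main_lemma K hlq hb hreg j t s, add_right_comm]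
end

section
/- Let I ⊆ R be a monomial ideal with linear quotients whose decomposition function b is regular, let m ∈ G(I), α ⊆ set(m) with |α| = p, and let σ be a permutation of α such that ch(m,α,σ) is nondegenerate, with vertex monomials m_0 = m and m_i = b(x_{σ_i} · m_{i−1}). Then for all indices 1 ≤ j < ℓ ≤ p one has m_j ≠ x_{σ_j} · m_{j−1} / x_{σ_ℓ}; that is, the exponent vector of b(x_{σ_j} · m_{j−1}) is never equal to the exponent vector of m_{j−1} plus the standard basis vector e_{σ_j} minus the standard basis vector e_{σ_ℓ}. -/
open MvPolynomial

/-- The sequence of vertex monomials `m_0 = m₀`, `m_{i+1} = b(x_{σ(i)} · m_i)` of the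
simplex `ch(m, α, σ)` (here `σ` is 0-indexed: `σ 0, …, σ (p-1)` is the permutation). -/
noncomputable def chainSeq {n k : ℕ} (m : Fin k → (Fin n →₀ ℕ)) (b : (Fin n →₀ ℕ) → Fin k)
    (m0 : Fin n →₀ ℕ) (σ : ℕ → Fin n) : ℕ → (Fin n →₀ ℕ)
  | 0 => m0
  | i + 1 => m (b (chainSeq m b m0 σ i + Finsupp.single (σ i) 1))

/-- `σ 0, …, σ (p-1)` is a permutation (an ordering) of the finite set `α`. -/
def PermOf {n : ℕ} (σ : ℕ → Fin n) (p : ℕ) (α : Finset (Fin n)) : Prop :=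
  Set.InjOn σ (Set.Iio p) ∧ ∀ a : Fin n, a ∈ α ↔ ∃ i < p, σ i = a

/-- `ch(m,α,σ)` is nondegenerate: the vertex monomials `m_0, …, m_p` are pairwise
distinct. -/
def Nondeg {n k : ℕ} (m : Fin k → (Fin n →₀ ℕ)) (b : (Fin n →₀ ℕ) → Fin k)
    (m0 : Fin n →₀ ℕ) (σ : ℕ → Fin n) (p : ℕ) : Prop :=
  Set.InjOn (chainSeq m b m0 σ) (Set.Iic p)

/-- A monomial (exponent vector) regarded as a point of `ℝⁿ`. -/
def toR {n : ℕ} (u : Fin n →₀ ℕ) : Fin n → ℝ := fun a => (u a : ℝ)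

/-- The set of vertex monomials of `ch(m,α,σ)`. -/
def vertSet {n k : ℕ} (m : Fin k → (Fin n →₀ ℕ)) (b : (Fin n →₀ ℕ) → Fin k)
    (m0 : Fin n →₀ ℕ) (σ : ℕ → Fin n) (p : ℕ) : Set (Fin n →₀ ℕ) :=
  {v | ∃ i ≤ p, v = chainSeq m b m0 σ i}

lemma X_mem_colonJ_iff (K : Type*) [Field K] {n k : ℕ} (m : Fin k → (Fin n →₀ ℕ))
    (j : Fin k) (t : Fin n) :
    (MvPolynomial.X t : MvPolynomial (Fin n) K) ∈ colonJ K m j ↔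
      MvPolynomial.monomial (m j + Finsupp.single t 1) (1 : K) ∈
        genIdeal K {u | ∃ i : Fin k, i < j ∧ u = m i} := by
  rw [colonJ, Ideal.span, Submodule.mem_colon_span_singleton, smul_eq_mul, X, monomial_mul,
    one_mul, add_comm]

/-- The sequence of indices of the vertex monomials. -/
noncomputable def idxSeq {n k : ℕ} (m : Fin k → (Fin n →₀ ℕ)) (b : (Fin n →₀ ℕ) → Fin k)
    (σ : ℕ → Fin n) (j : Fin k) : ℕ → Fin k
  | 0 => j
  | i + 1 => b (chainSeq m b (m j) σ i + Finsupp.single (σ i) 1)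

lemma chainSeq_eq_idxSeq {n k : ℕ} (m : Fin k → (Fin n →₀ ℕ)) (b : (Fin n →₀ ℕ) → Fin k)
    (σ : ℕ → Fin n) (j : Fin k) : ∀ i, chainSeq m b (m j) σ i = m (idxSeq m b σ j i)
  | 0 => rfl
  | i + 1 => rfl

/-- if `ch(m,α,σ)` is nondegenerate, then for `1 ≤ j < ℓ ≤ p` the monomial
`m_j = b(x_{σ_j}·m_{j-1})` never equals `x_{σ_j}·m_{j-1}/x_{σ_ℓ}`; equivalently (in ℤⁿ)
`m_j + e_{σ_ℓ} ≠ m_{j-1} + e_{σ_j}`.  (Here indices are 0-based: the paper's `j` is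
`a+1` and `ℓ` is `c+1`.) -/
theorem stmt2 (K : Type*) [Field K] {n k : ℕ} (m : Fin k → (Fin n →₀ ℕ))
    (hmin : MinimalGens m) (hlq : HasLinearQuotients K m)
    (b : (Fin n →₀ ℕ) → Fin k) (hb : IsDecompositionFunction K m b)
    (hreg : IsRegularDecomp K m b)
    (j : Fin k) (α : Finset (Fin n)) (hα : ↑α ⊆ mset K m j)
    (p : ℕ) (hcard : α.card = p)
    (σ : ℕ → Fin n) (hσ : PermOf σ p α)
    (hnd : Nondeg m b (m j) σ p) :
    ∀ a c : ℕ, a < c → c < p →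
      chainSeq m b (m j) σ (a + 1) + Finsupp.single (σ c) 1 ≠
        chainSeq m b (m j) σ a + Finsupp.single (σ a) 1 := by
  intro a c hac hcp heq
  set idx := idxSeq m b σ j with hidx
  have hchain : ∀ i, chainSeq m b (m j) σ i = m (idx i) := chainSeq_eq_idxSeq m b σ j
  -- Claim A : σ i ∈ set(m_{idx i}) for i < p
  have hA : ∀ i, i < p → σ i ∈ mset K m (idx i) := by
    intro i hip
    by_contra hns
    set u := chainSeq m b (m j) σ i + Finsupp.single (σ i) 1 with hu
    have hle : m (idx i) ≤ u := by
      rw [hu, hchain i]; exact self_le_add_right _ _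
    have humem : MvPolynomial.monomial u (1 : K) ∈ genIdeal K (Set.range m) :=
      (mem_genIdeal_iff K _ u).mpr ⟨m (idx i), ⟨idx i, rfl⟩, hle⟩
    obtain ⟨h1, h2⟩ := hb u humem
    have hble : b u ≤ idx i :=
      h2 (idx i) ((mem_genIdeal_iff K _ u).mpr ⟨m (idx i), ⟨idx i, le_rfl, rfl⟩, hle⟩)
    have hbe : b u = idx i := by
      rcases lt_or_eq_of_le hble with hblt | hbeq
      · exfalso
        obtain ⟨v, ⟨i', hi', rfl⟩, hvle⟩ := (mem_genIdeal_iff K _ u).mp h1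
        apply hns
        rw [mset, Set.mem_setOf_eq, X_mem_colonJ_iff]
        refine (mem_genIdeal_iff K _ _).mpr ⟨m i', ⟨i', lt_of_le_of_lt hi' hblt, rfl⟩, ?_⟩
        rw [← hchain i]
        exact hvle
      · exact hbeq
    have hstep : chainSeq m b (m j) σ (i + 1) = chainSeq m b (m j) σ i := by
      show m (b u) = _
      rw [hbe, ← hchain i]
    have := hnd (Set.mem_Iic.mpr (by omega : i + 1 ≤ p)) (Set.mem_Iic.mpr (by omega : i ≤ p))
      hstep
    omega
  -- Claim B : the sets shrink along the chain
  have hB : ∀ i, i < p → mset K m (idx (i + 1)) ⊆ mset K m (idx i) := by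
    intro i hip
    have := hreg (idx i) (σ i) (hA i hip)
    rw [← hchain i] at this
    exact this
  -- Claim C : σ c ∈ set(m_{idx (a+1)})
  have hC : ∀ e, a + 1 ≤ e → e < p → mset K m (idx e) ⊆ mset K m (idx (a + 1)) := by
    intro e
    induction e with
    | zero => intro h; omega
    | succ e ih =>
      intro h1 h2
      rcases Nat.lt_or_ge (a + 1) (e + 1) with hlt | hge
      · exact (hB e (by omega)).trans (ih (by omega) (by omega))
      · have : a + 1 = e + 1 := by omega
        rw [this]
  have hσc : σ c ∈ mset K m (idx (a + 1)) := hC c hac hcp (hA c hcp)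
  -- derive the contradiction
  set u := chainSeq m b (m j) σ a + Finsupp.single (σ a) 1 with hu
  have hβ : idx (a + 1) = b u := rfl
  have hmem := (X_mem_colonJ_iff K m (idx (a + 1)) (σ c)).mp hσc
  rw [← hchain (a + 1), heq] at hmem
  obtain ⟨v, ⟨i', hi', rfl⟩, hvle⟩ := (mem_genIdeal_iff K _ _).mp hmem
  have humem : MvPolynomial.monomial u (1 : K) ∈ genIdeal K (Set.range m) :=
    (mem_genIdeal_iff K _ u).mpr ⟨m i', ⟨i', rfl⟩, hvle⟩
  have hle2 := (hb u humem).2 i'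
    ((mem_genIdeal_iff K _ u).mpr ⟨m i', ⟨i', le_rfl, rfl⟩, hvle⟩)
  rw [← hβ] at hle2
  exact absurd hi' (not_lt.mpr hle2)
end

section
/- Let I ⊆ R be a monomial ideal with linear quotients whose decomposition function b is regular, let m ∈ G(I), α ⊆ set(m) with |α| = p, and let σ be a permutation of α with ch(m,α,σ) nondegenerate, with vertex monomials m_0 = m, m_i = b(x_{σ_i} · m_{i−1}). Fix 1 ≤ ℓ ≤ p−1 and let F be the facet of ch(m,α,σ) spanned by the exponent vectors of {m_0,…,m_p} ∖ {m_ℓ}. Then: (a) if σ_ℓ ∈ set(b(x_{σ_{ℓ+1}} · m_{ℓ−1})), then F is an interior facet, and the only two nondegenerate simplices of the form ch(m,α,τ) containing F as a facet are ch(m,α,σ) and ch(m,α,σ′), where σ′ = (σ_1,…,σ_{ℓ−1},σ_{ℓ+1},σ_ℓ,σ_{ℓ+2},…,σ_p) is obtained from σ by swapping positions ℓ and ℓ+1; (b) if σ_ℓ ∉ set(b(x_{σ_{ℓ+1}} · m_{ℓ−1})), then F is exterior, i.e., ch(m,α,σ) is the only nondegenerate simplex of the form ch(m,α,τ) containing F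 as a facet. -/
open MvPolynomial

/-- The permutation obtained from `σ` by swapping positions `c` and `c+1`. -/
def swapAdj {n : ℕ} (σ : ℕ → Fin n) (c : ℕ) : ℕ → Fin n :=
  fun i => if i = c then σ (c + 1) else if i = c + 1 then σ c else σ i

/-- `F` (a set of vertex monomials) is a facet of the simplex `ch(m,α,τ)`: it is
obtained from the vertex set by removing exactly one vertex. -/
def IsFacetOf {n k : ℕ} (m : Fin k → (Fin n →₀ ℕ)) (b : (Fin n →₀ ℕ) → Fin k)
    (m0 : Fin n →₀ ℕ) (τ : ℕ → Fin n) (p : ℕ) (F : Set (Fin n →₀ ℕ)) : Prop :=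
  ∃ i ≤ p, F = vertSet m b m0 τ p \ {chainSeq m b m0 τ i}

namespace Stmt5Aux

variable {K : Type*} [Field K] {n k : ℕ} {m : Fin k → (Fin n →₀ ℕ)}
  {b : (Fin n →₀ ℕ) → Fin k}

lemma mem_genIdeal_iff {S : Set (Fin n →₀ ℕ)} {u : Fin n →₀ ℕ} :
    (MvPolynomial.monomial u (1:K)) ∈ genIdeal K S ↔ ∃ v ∈ S, v ≤ u := by
  rw [genIdeal, mem_ideal_span_monomial_image]
  constructor
  · intro h
    exact h u (by simp [MvPolynomial.support_monomial])
  · intro h xi hxi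
    have hx : xi = u := by
      have := hxi; simp [MvPolynomial.support_monomial] at this; exact this.symm ▸ rfl
    subst hx; exact h

lemma mem_colonJ_iff {j : Fin k} {f : MvPolynomial (Fin n) K} :
    f ∈ colonJ K m j ↔
      f * monomial (m j) 1 ∈ genIdeal K {u | ∃ i : Fin k, i < j ∧ u = m i} :=
  by
    rw [colonJ, Submodule.mem_colon]
    constructor
    · intro h; exact h _ (Ideal.subset_span rfl)
    · intro h s hs
      obtain ⟨a, rfl⟩ := Ideal.mem_span_singleton'.mp hs
      rw [smul_eq_mul, mul_left_comm]
      exact Ideal.mul_mem_left _ a h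

lemma mset_iff {j : Fin k} {t : Fin n} :
    t ∈ mset K m j ↔ ∃ i, i < j ∧ m i ≤ m j + Finsupp.single t 1 := by
  rw [mset, Set.mem_setOf_eq, mem_colonJ_iff, X, monomial_mul, one_mul, add_comm,
      mem_genIdeal_iff]
  constructor
  · rintro ⟨v, ⟨i, hij, rfl⟩, hv⟩; exact ⟨i, hij, hv⟩
  · rintro ⟨i, hij, hv⟩; exact ⟨m i, ⟨i, hij, rfl⟩, hv⟩

lemma m_inj (hmin : MinimalGens m) : Function.Injective m := fun i j h => hmin i j h.le

lemma b_spec (hb : IsDecompositionFunction K m b) {u : Fin n →₀ ℕ} {i : Fin k}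
    (hi : m i ≤ u) : m (b u) ≤ u ∧ ∀ i', m i' ≤ u → b u ≤ i' := by
  have hmem : (monomial u (1:K)) ∈ genIdeal K (Set.range m) :=
    mem_genIdeal_iff.mpr ⟨m i, ⟨i, rfl⟩, hi⟩
  obtain ⟨h1, h2⟩ := hb u hmem
  have hmin' : ∀ i', m i' ≤ u → b u ≤ i' := by
    intro i' hi'
    exact h2 i' (mem_genIdeal_iff.mpr ⟨m i', ⟨i', le_refl _, rfl⟩, hi'⟩)
  obtain ⟨v, ⟨i', hi'le, rfl⟩, hvu⟩ := mem_genIdeal_iff.mp h1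
  have : i' = b u := le_antisymm hi'le (hmin' i' hvu)
  exact ⟨this ▸ hvu, hmin'⟩

lemma b_div (hb : IsDecompositionFunction K m b) {u : Fin n →₀ ℕ} {i : Fin k}
    (hi : m i ≤ u) : m (b u) ≤ u := (b_spec hb hi).1

lemma b_min (hb : IsDecompositionFunction K m b) {u : Fin n →₀ ℕ} {i : Fin k}
    (hi : m i ≤ u) : b u ≤ i := (b_spec hb hi).2 i hi

lemma le_add_single {v : Fin n →₀ ℕ} {t : Fin n} : v ≤ v + Finsupp.single t 1 :=
  le_add_of_nonneg_right zero_le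

lemma bstep_lt (hb : IsDecompositionFunction K m b) {j : Fin k} {t : Fin n}
    (ht : t ∈ mset K m j) : b (m j + Finsupp.single t 1) < j := by
  obtain ⟨i, hij, hile⟩ := mset_iff.mp ht
  exact lt_of_le_of_lt (b_min hb hile) hij

lemma bstep_le (hb : IsDecompositionFunction K m b) (j : Fin k) (t : Fin n) :
    b (m j + Finsupp.single t 1) ≤ j := b_min hb le_add_single

lemma bstep_eq (hb : IsDecompositionFunction K m b) {j : Fin k} {t : Fin n}
    (ht : t ∉ mset K m j) : b (m j + Finsupp.single t 1) = j := by
  refine le_antisymm (bstep_le hb j t) (le_of_not_gt fun hlt => ht ?_)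
  exact mset_iff.mpr ⟨b (m j + Finsupp.single t 1), hlt, b_div hb le_add_single⟩

/-- Lemma N : the minimal divisor of `v` agrees with `v` on every coordinate of its `set`. -/
lemma lemN (hb : IsDecompositionFunction K m b) {v : Fin n →₀ ℕ} {i : Fin k}
    (hi : m i ≤ v) {ρ : Fin n} (hρ : ρ ∈ mset K m (b v)) : m (b v) ρ = v ρ := by
  by_contra hne
  have hle : m (b v) ρ ≤ v ρ := (b_div hb hi) ρ
  have hlt : m (b v) ρ < v ρ := lt_of_le_of_ne hle hne
  have hdiv : m (b v) + Finsupp.single ρ 1 ≤ v := by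
    intro a
    rcases eq_or_ne a ρ with rfl | ha
    · simpa [Finsupp.add_apply, Finsupp.single_apply] using hlt
    · simpa [Finsupp.add_apply, Finsupp.single_apply, ha.symm] using (b_div hb hi) a
  have h1 : b v ≤ b (m (b v) + Finsupp.single ρ 1) :=
    b_min hb ((b_div hb (le_add_single (v := m (b v)) (t := ρ))).trans hdiv)
  exact absurd (lt_of_le_of_lt h1 (bstep_lt hb hρ)) (lt_irrefl _)

/-- The linear-quotients "colon trick". -/
lemma lq_trick (hlq : HasLinearQuotients K m) {j : Fin k} {z : Fin n →₀ ℕ}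
    (h : ∃ i, i < j ∧ m i ≤ m j + z) : ∃ s ∈ mset K m j, 1 ≤ z s := by
  obtain ⟨S, hS⟩ := hlq j
  have hz : (monomial z (1:K)) ∈ colonJ K m j := by
    rw [mem_colonJ_iff, monomial_mul, one_mul]
    obtain ⟨i, hij, hile⟩ := h
    exact mem_genIdeal_iff.mpr ⟨m i, ⟨i, hij, rfl⟩, by rwa [add_comm]⟩
  rw [hS] at hz
  obtain ⟨s, hsS, hzs⟩ := mem_ideal_span_X_image.mp hz z (by simp [support_monomial])
  refine ⟨s, ?_, Nat.one_le_iff_ne_zero.mpr hzs⟩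
  rw [mset, Set.mem_setOf_eq, hS]
  exact Ideal.subset_span ⟨s, hsS, rfl⟩

/-- **Key commutation lemma**: for a regular decomposition function,
`b(x_r · v)` divides `b(v)·x_r`. -/
lemma key_comm (hmin : MinimalGens m) (hlq : HasLinearQuotients K m)
    (hb : IsDecompositionFunction K m b) (hreg : IsRegularDecomp K m b)
    {v : Fin n →₀ ℕ} {i : Fin k} (hi : m i ≤ v) (r : Fin n) :
    m (b (v + Finsupp.single r 1)) ≤ m (b v) + Finsupp.single r 1 := by
  have hGv : m (b v) ≤ v := b_div hb hi
  have hGvr : m (b v) ≤ v + Finsupp.single r 1 := hGv.trans le_add_single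
  have hXvr : m (b (v + Finsupp.single r 1)) ≤ v + Finsupp.single r 1 := b_div hb hGvr
  have hXle : b (v + Finsupp.single r 1) ≤ b v := b_min hb hGvr
  by_cases hXv : m (b (v + Finsupp.single r 1)) ≤ v
  · have heq : b (v + Finsupp.single r 1) = b v := le_antisymm hXle (b_min hb hXv)
    rw [heq]; exact le_add_single
  · have hlt : b (v + Finsupp.single r 1) < b v := by
      rcases lt_or_eq_of_le hXle with h | h
      · exact h
      · exact absurd (h ▸ hGv) hXv
    -- first colon trick at `b v`
    obtain ⟨r₁, hr₁set, hr₁⟩ := lq_trick hlq (j := b v)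
      ⟨b (v + Finsupp.single r 1), hlt, by rwa [add_tsub_cancel_of_le hGvr]⟩
    have hGr₁ : m (b v) r₁ = v r₁ := lemN hb hi hr₁set
    have hr₁r : r₁ = r := by
      rw [Finsupp.tsub_apply, Finsupp.add_apply, Finsupp.single_apply] at hr₁
      by_contra hne
      rw [if_neg (fun h => hne h.symm)] at hr₁
      omega
    rw [hr₁r] at hr₁set
    clear hr₁ hGr₁ hr₁r
    -- the regular step generator at `b v` in direction `r`
    have hG2 : m (b (m (b v) + Finsupp.single r 1)) ≤ m (b v) + Finsupp.single r 1 :=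
      b_div hb (le_add_single (v := m (b v)) (t := r))
    have hG2vr : m (b (m (b v) + Finsupp.single r 1)) ≤ v + Finsupp.single r 1 :=
      hG2.trans (add_le_add hGv le_rfl)
    have hle2 : b (v + Finsupp.single r 1) ≤ b (m (b v) + Finsupp.single r 1) :=
      b_min hb hG2vr
    rcases eq_or_lt_of_le hle2 with heq | hlt2
    · rw [heq]; exact hG2
    · -- second colon trick at `b (m (b v) + e r)`
      obtain ⟨r₂, hr₂set, hr₂⟩ := lq_trick hlq (j := b (m (b v) + Finsupp.single r 1))
        ⟨b (v + Finsupp.single r 1), hlt2, by rwa [add_tsub_cancel_of_le hG2vr]⟩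
      exfalso
      have hN2 := lemN hb (le_add_single (v := m (b v)) (t := r)) hr₂set
      have hr₂G : r₂ ∈ mset K m (b v) := hreg (b v) r hr₁set hr₂set
      have hGr₂ : m (b v) r₂ = v r₂ := lemN hb hi hr₂G
      rw [Finsupp.tsub_apply, Finsupp.add_apply] at hr₂
      rw [Finsupp.add_apply] at hN2
      omega

lemma key_comm' (hmin : MinimalGens m) (hlq : HasLinearQuotients K m)
    (hb : IsDecompositionFunction K m b) (hreg : IsRegularDecomp K m b)
    {v : Fin n →₀ ℕ} {i : Fin k} (hi : m i ≤ v) (r : Fin n) :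
    b (v + Finsupp.single r 1) = b (m (b v) + Finsupp.single r 1) := by
  refine le_antisymm ?_ ?_
  · exact b_min hb ((b_div hb (le_add_single (v := m (b v)) (t := r))).trans
      (add_le_add (b_div hb hi) le_rfl))
  · exact b_min hb (key_comm hmin hlq hb hreg hi r)

/-- The index sequence of a chain. -/
noncomputable def cidx {n k : ℕ} (m : Fin k → (Fin n →₀ ℕ)) (b : (Fin n →₀ ℕ) → Fin k)
    (j : Fin k) (σ : ℕ → Fin n) : ℕ → Fin k
  | 0 => j
  | i + 1 => b (m (cidx m b j σ i) + Finsupp.single (σ i) 1)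

lemma chainSeq_cidx {j : Fin k} {σ : ℕ → Fin n} :
    ∀ i, chainSeq m b (m j) σ i = m (cidx m b j σ i)
  | 0 => rfl
  | i + 1 => by rw [chainSeq, chainSeq_cidx i, cidx]

section Chain

variable (hmin : MinimalGens m) (hlq : HasLinearQuotients K m)
  (hb : IsDecompositionFunction K m b) (hreg : IsRegularDecomp K m b)
  {j : Fin k} {σ : ℕ → Fin n} {p : ℕ}

include hb

lemma letter_mem (hnd : Nondeg m b (m j) σ p) {i : ℕ} (hip : i < p) :
    σ i ∈ mset K m (cidx m b j σ i) := by
  by_contra hmem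
  have h1 : cidx m b j σ (i + 1) = cidx m b j σ i := bstep_eq hb hmem
  have h2 : chainSeq m b (m j) σ (i + 1) = chainSeq m b (m j) σ i := by
    rw [chainSeq_cidx, chainSeq_cidx, h1]
  exact Nat.succ_ne_self i (hnd (Set.mem_Iic.mpr hip) (Set.mem_Iic.mpr hip.le) h2)

lemma cidx_succ_lt (hnd : Nondeg m b (m j) σ p) {i : ℕ} (hip : i < p) :
    cidx m b j σ (i + 1) < cidx m b j σ i :=
  bstep_lt hb (letter_mem hb hnd hip)

lemma cidx_lt_of_lt (hnd : Nondeg m b (m j) σ p) {i i' : ℕ} (h : i < i') (h' : i' ≤ p) :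
    cidx m b j σ i' < cidx m b j σ i := by
  have H : ∀ i'' i1, i1 < i'' → i'' ≤ p → cidx m b j σ i'' < cidx m b j σ i1 := by
    intro i''
    induction i'' with
    | zero => intro i1 hlt _; omega
    | succ a ih =>
      intro i1 hlt hle
      rcases Nat.lt_or_ge i1 a with hia | hia
      · exact lt_trans (cidx_succ_lt hb hnd (by omega)) (ih i1 hia (by omega))
      · have hi : i1 = a := by omega
        subst hi
        exact cidx_succ_lt hb hnd (by omega)
  exact H i' i h h'

include hreg in
lemma mset_subset (hnd : Nondeg m b (m j) σ p) {i i' : ℕ} (h : i ≤ i') (h' : i' ≤ p) :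
    mset K m (cidx m b j σ i') ⊆ mset K m (cidx m b j σ i) := by
  have H : ∀ i'' i1, i1 ≤ i'' → i'' ≤ p → mset K m (cidx m b j σ i'') ⊆ mset K m (cidx m b j σ i1) := by
    intro i''
    induction i'' with
    | zero => intro i1 h1 _
              have : i1 = 0 := by omega
              subst this; exact subset_rfl
    | succ a ih =>
      intro i1 h1 h2
      rcases Nat.lt_or_ge i1 (a+1) with hia | hia
      · refine subset_trans ?_ (ih i1 (by omega) (by omega))
        exact hreg (cidx m b j σ a) (σ a) (letter_mem hb hnd (by omega))
      · have : i1 = a + 1 := by omega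
        subst this; exact subset_rfl
  exact H i' i h h'

omit [Field K] hb in
include hmin in
lemma nondeg_of_desc (hdesc : ∀ i < p, cidx m b j σ (i + 1) < cidx m b j σ i) :
    Nondeg m b (m j) σ p := by
  have hmono : ∀ i' i : ℕ, i < i' → i' ≤ p → cidx m b j σ i' < cidx m b j σ i := by
    intro i'
    induction i' with
    | zero => intro i h h'; omega
    | succ a ih =>
      intro i h h'
      rcases Nat.lt_or_ge i a with hia | hia
      · exact lt_trans (hdesc a (by omega)) (ih i hia (by omega))
      · have hia2 : i = a := by omega
        rw [hia2]; exact hdesc a (by omega)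
  intro x hx y hy hxy
  rw [Set.mem_Iic] at hx hy
  rw [chainSeq_cidx, chainSeq_cidx] at hxy
  have := m_inj hmin hxy
  rcases Nat.lt_trichotomy x y with h | h | h
  · exact absurd this (ne_of_gt (hmono y x h hy))
  · exact h
  · exact absurd this (ne_of_lt (hmono x y h hx))

include hmin in
lemma letters_eq {g : Fin k} {x y : Fin n}
    (h : m (b (m g + Finsupp.single x 1)) = m (b (m g + Finsupp.single y 1)))
    (hne : m (b (m g + Finsupp.single x 1)) ≠ m g) : x = y := by
  have hnle : ¬ m (b (m g + Finsupp.single x 1)) ≤ m g := by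
    intro hle
    exact hne (congrArg m (hmin _ _ hle))
  obtain ⟨ρ, hρ⟩ := not_forall.mp (fun hall => hnle (Finsupp.le_def.mpr hall))
  push_neg at hρ
  have hx : x = ρ := by
    have h1 := Finsupp.le_def.mp (b_div hb (le_add_single (v := m g) (t := x))) ρ
    rw [Finsupp.add_apply, Finsupp.single_apply] at h1
    by_contra hc
    rw [if_neg hc] at h1
    omega
  have hy : y = ρ := by
    have h1 := Finsupp.le_def.mp (b_div hb (le_add_single (v := m g) (t := y))) ρ
    rw [h] at hρ
    rw [Finsupp.add_apply, Finsupp.single_apply] at h1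
    by_contra hc
    rw [if_neg hc] at h1
    omega
  rw [hx, hy]

end Chain

lemma strictMono_range_eq {γ : Type*} [LinearOrder γ] {N : ℕ} {f g : Fin N → γ}
    (hf : StrictMono f) (hg : StrictMono g) (h : Set.range f = Set.range g) :
    ∀ x, f x = g x := by
  have H : ∀ v : ℕ, ∀ x : Fin N, x.val = v → f x = g x := by
    intro v
    induction v using Nat.strong_induction_on with
    | _ v ih =>
      intro x hx
      obtain ⟨a, ha⟩ : f x ∈ Set.range g := h ▸ Set.mem_range_self x
      obtain ⟨c, hc⟩ : g x ∈ Set.range f := h.symm ▸ Set.mem_range_self x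
      have hga : g x ≤ f x := by
        rcases Nat.lt_or_ge a.val x.val with hlt | hge
        · exfalso
          have hfa : f a = g a := ih a.val (by omega) a rfl
          have hax : a = x := hf.injective (by rw [hfa, ha])
          rw [hax] at hlt; omega
        · calc g x ≤ g a := hg.monotone (Fin.le_def.mpr hge)
            _ = f x := ha
      have hfa : f x ≤ g x := by
        rcases Nat.lt_or_ge c.val x.val with hlt | hge
        · exfalso
          have hgc : f c = g c := ih c.val (by omega) c rfl
          have hcx : c = x := hg.injective (by rw [← hgc, hc])
          rw [hcx] at hlt; omega
        · calc f x ≤ f c := hf.monotone (Fin.le_def.mpr hge)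
            _ = g x := hc
      exact le_antisymm hfa hga
  exact fun x => H x.val x rfl

lemma vertSet_eq_image {m0 : Fin n →₀ ℕ} {σ : ℕ → Fin n} {p : ℕ} :
    vertSet m b m0 σ p = chainSeq m b m0 σ '' Set.Iic p := by
  ext v
  simp only [vertSet, Set.mem_setOf_eq, Set.mem_image, Set.mem_Iic]
  constructor
  · rintro ⟨i, hi, rfl⟩; exact ⟨i, hi, rfl⟩
  · rintro ⟨i, hi, rfl⟩; exact ⟨i, hi, rfl⟩

lemma facet_eq_image {m0 : Fin n →₀ ℕ} {σ : ℕ → Fin n} {p : ℕ}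
    (hnd : Nondeg m b m0 σ p) {i₀ : ℕ} (hi₀ : i₀ ≤ p) :
    vertSet m b m0 σ p \ {chainSeq m b m0 σ i₀} =
      chainSeq m b m0 σ '' (Set.Iic p \ {i₀}) := by
  ext v
  simp only [vertSet_eq_image, Set.mem_diff, Set.mem_image, Set.mem_singleton_iff,
    Set.mem_Iic]
  constructor
  · rintro ⟨⟨i, hi, rfl⟩, hne⟩
    exact ⟨i, ⟨hi, fun he => hne (he ▸ rfl)⟩, rfl⟩
  · rintro ⟨i, ⟨hi, hne⟩, rfl⟩
    refine ⟨⟨i, hi, rfl⟩, fun he => hne ?_⟩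
    exact hnd (Set.mem_Iic.mpr hi) (Set.mem_Iic.mpr hi₀) he

section More

variable (hmin : MinimalGens m) (hlq : HasLinearQuotients K m)
  (hb : IsDecompositionFunction K m b) (hreg : IsRegularDecomp K m b)
  {j : Fin k} {σ τ : ℕ → Fin n} {p : ℕ}

lemma chain_succ {m0 : Fin n →₀ ℕ} (σ : ℕ → Fin n) (i : ℕ) :
    chainSeq m b m0 σ (i+1) = m (b (chainSeq m b m0 σ i + Finsupp.single (σ i) 1)) := by
  rw [chainSeq]

include hb in
lemma chain_step_le (σ : ℕ → Fin n) :
    ∀ ii, chainSeq m b (m j) σ (ii+1) ≤ chainSeq m b (m j) σ ii + Finsupp.single (σ ii) 1 := by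
  intro ii
  rw [chain_succ]
  cases ii with
  | zero => exact b_div hb (i := j) le_add_single
  | succ a =>
    rw [chain_succ]
    exact b_div hb le_add_single

include hmin hb in
lemma exceed_at_letter {g : Fin k} {x : Fin n}
    (hne : m (b (m g + Finsupp.single x 1)) ≠ m g) :
    m g x < m (b (m g + Finsupp.single x 1)) x := by
  have hnle : ¬ m (b (m g + Finsupp.single x 1)) ≤ m g := by
    intro hle
    exact hne (congrArg m (hmin _ _ hle))
  obtain ⟨ρ, hρ⟩ := not_forall.mp (fun hall => hnle (Finsupp.le_def.mpr hall))
  push_neg at hρ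
  have h1 := Finsupp.le_def.mp (b_div hb (le_add_single (v := m g) (t := x))) ρ
  rw [Finsupp.add_apply, Finsupp.single_apply] at h1
  by_cases hc : x = ρ
  · subst hc; omega
  · rw [if_neg hc] at h1; omega

include hmin hb in
lemma not_mem_of_fix {g : Fin k} {x : Fin n}
    (h : m (b (m g + Finsupp.single x 1)) = m g) : x ∉ mset K m g :=
  fun hx => absurd (m_inj hmin h) (ne_of_lt (bstep_lt hb hx))

include hmin hlq hb hreg in
lemma key_comm_gen (g : Fin k) (s t : Fin n) :
    b (m (b (m g + Finsupp.single t 1)) + Finsupp.single s 1) =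
      b (m (b (m g + Finsupp.single s 1)) + Finsupp.single t 1) := by
  rw [← key_comm' hmin hlq hb hreg (le_add_single (v := m g) (t := t)) s,
      ← key_comm' hmin hlq hb hreg (le_add_single (v := m g) (t := s)) t,
      add_right_comm]

include hmin in
lemma cidx_eq_of_chain_eq {j' : Fin k} {a a' : ℕ}
    (h : chainSeq m b (m j) τ a = chainSeq m b (m j') σ a') :
    cidx m b j τ a = cidx m b j' σ a' := by
  apply m_inj hmin
  rw [chainSeq_cidx, chainSeq_cidx] at h
  exact h

include hmin hb in
lemma pair_letter (hndσ : Nondeg m b (m j) σ p) {a a' : ℕ} (ha' : a' < p)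
    (h0 : chainSeq m b (m j) τ a = chainSeq m b (m j) σ a')
    (h1 : chainSeq m b (m j) τ (a+1) = chainSeq m b (m j) σ (a'+1)) : τ a = σ a' := by
  have hg : cidx m b j τ a = cidx m b j σ a' := cidx_eq_of_chain_eq hmin h0
  rw [chain_succ, chain_succ, chainSeq_cidx, chainSeq_cidx, hg] at h1
  have hne : m (b (m (cidx m b j σ a') + Finsupp.single (τ a) 1)) ≠ m (cidx m b j σ a') := by
    intro hcon
    have hcon2 : chainSeq m b (m j) σ (a'+1) = chainSeq m b (m j) σ a' := by
      rw [chain_succ, chainSeq_cidx, ← h1]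
      exact hcon
    exact Nat.succ_ne_self a' (hndσ (Set.mem_Iic.mpr (by omega)) (Set.mem_Iic.mpr (by omega)) hcon2)
  exact letters_eq hmin hb h1 hne

lemma pair_next {a a' : ℕ}
    (h0 : chainSeq m b (m j) τ a = chainSeq m b (m j) σ a') (hl : τ a = σ a') :
    chainSeq m b (m j) τ (a+1) = chainSeq m b (m j) σ (a'+1) := by
  rw [chain_succ, chain_succ, h0, hl]

-- swapped chain lemmas
lemma swap_apply_lt {c i : ℕ} (h : i < c) : swapAdj σ c i = σ i := by
  unfold swapAdj
  rw [if_neg (by omega), if_neg (by omega)]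

lemma swap_apply_c {c : ℕ} : swapAdj σ c c = σ (c+1) := by
  unfold swapAdj; rw [if_pos rfl]

lemma swap_apply_c1 {c : ℕ} : swapAdj σ c (c+1) = σ c := by
  unfold swapAdj; rw [if_neg (by omega), if_pos rfl]

lemma swap_apply_gt {c i : ℕ} (h : c + 1 < i) : swapAdj σ c i = σ i := by
  unfold swapAdj
  rw [if_neg (by omega), if_neg (by omega)]

lemma swap_cidx_le_c {c : ℕ} : ∀ i, i ≤ c → cidx m b j (swapAdj σ c) i = cidx m b j σ i := by
  intro i
  induction i with
  | zero => intro _; rfl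
  | succ a ih =>
    intro h
    show b (m (cidx m b j (swapAdj σ c) a) + Finsupp.single (swapAdj σ c a) 1) = _
    rw [ih (by omega), swap_apply_lt (by omega)]
    rfl

lemma swap_chain_le_c {c i : ℕ} (h : i ≤ c) :
    chainSeq m b (m j) (swapAdj σ c) i = chainSeq m b (m j) σ i := by
  rw [chainSeq_cidx, chainSeq_cidx, swap_cidx_le_c i h]

lemma swap_cidx_c1 {c : ℕ} :
    cidx m b j (swapAdj σ c) (c+1) = b (m (cidx m b j σ c) + Finsupp.single (σ (c+1)) 1) := by
  show b (m (cidx m b j (swapAdj σ c) c) + Finsupp.single (swapAdj σ c c) 1) = _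
  rw [swap_cidx_le_c c le_rfl, swap_apply_c]

include hmin hlq hb hreg in
lemma swap_cidx_c2 {c : ℕ} :
    cidx m b j (swapAdj σ c) (c+2) = cidx m b j σ (c+2) := by
  show b (m (cidx m b j (swapAdj σ c) (c+1)) + Finsupp.single (swapAdj σ c (c+1)) 1) = _
  rw [swap_cidx_c1, swap_apply_c1, key_comm_gen hmin hlq hb hreg]
  rfl

include hmin hlq hb hreg in
lemma swap_cidx_ge {c : ℕ} : ∀ i, c + 2 ≤ i → cidx m b j (swapAdj σ c) i = cidx m b j σ i := by
  intro i
  induction i with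
  | zero => omega
  | succ a ih =>
    intro h
    rcases Nat.lt_or_ge (c+2) (a+1) with h' | h'
    · show b (m (cidx m b j (swapAdj σ c) a) + Finsupp.single (swapAdj σ c a) 1) = _
      rw [ih (by omega), swap_apply_gt (by omega)]
      rfl
    · have : a + 1 = c + 2 := by omega
      rw [this]
      exact swap_cidx_c2 hmin hlq hb hreg

include hmin hlq hb hreg in
lemma swap_chain_eq {c i : ℕ} (h : i ≠ c + 1) :
    chainSeq m b (m j) (swapAdj σ c) i = chainSeq m b (m j) σ i := by
  rcases Nat.lt_or_ge i (c+1) with h' | h'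
  · exact swap_chain_le_c (by omega)
  · rw [chainSeq_cidx, chainSeq_cidx, swap_cidx_ge hmin hlq hb hreg i (by omega)]

end More

section Swap

variable (hmin : MinimalGens m) (hlq : HasLinearQuotients K m)
  (hb : IsDecompositionFunction K m b) (hreg : IsRegularDecomp K m b)
  {j : Fin k} {σ τ : ℕ → Fin n} {p c : ℕ} {α : Finset (Fin n)}

def wswap (c : ℕ) (i : ℕ) : ℕ := if i = c then c + 1 else if i = c + 1 then c else i

lemma wswap_invol (c i : ℕ) : wswap c (wswap c i) = i := by
  unfold wswap
  rcases eq_or_ne i c with rfl | h1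
  · rw [if_pos rfl, if_neg (by omega), if_pos rfl]
  · rcases eq_or_ne i (c+1) with rfl | h2
    · rw [if_neg h1, if_pos rfl, if_pos rfl]
    · rw [if_neg h1, if_neg h2, if_neg h1, if_neg h2]

lemma wswap_lt {c i p : ℕ} (hc : c + 1 < p) (hi : i < p) : wswap c i < p := by
  unfold wswap; split_ifs <;> omega

lemma swapAdj_comp (σ : ℕ → Fin n) (c i : ℕ) : swapAdj σ c i = σ (wswap c i) := by
  unfold swapAdj wswap
  split_ifs <;> rfl

lemma permof_swap (hσ : PermOf σ p α) (hc : c + 1 < p) : PermOf (swapAdj σ c) p α := by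
  obtain ⟨hinj, hmem⟩ := hσ
  constructor
  · intro x hx y hy hxy
    rw [Set.mem_Iio] at hx hy
    rw [swapAdj_comp, swapAdj_comp] at hxy
    have := hinj (Set.mem_Iio.mpr (wswap_lt hc hx)) (Set.mem_Iio.mpr (wswap_lt hc hy)) hxy
    have h2 := congrArg (wswap c) this
    rwa [wswap_invol, wswap_invol] at h2
  · intro a
    rw [hmem a]
    constructor
    · rintro ⟨i, hi, rfl⟩
      exact ⟨wswap c i, wswap_lt hc hi, by rw [swapAdj_comp, wswap_invol]⟩
    · rintro ⟨i, hi, rfl⟩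
      exact ⟨wswap c i, wswap_lt hc hi, by rw [swapAdj_comp]⟩

include hmin hlq hb hreg in
lemma nondeg_swap (hnd : Nondeg m b (m j) σ p) (hc : c + 1 < p)
    (hin : σ c ∈ mset K m (cidx m b j (swapAdj σ c) (c+1))) :
    Nondeg m b (m j) (swapAdj σ c) p := by
  apply nondeg_of_desc hmin
  intro i hip
  rcases Nat.lt_or_ge i c with h1 | h1
  · have e1 : cidx m b j (swapAdj σ c) (i+1) = cidx m b j σ (i+1) :=
      swap_cidx_le_c (i+1) (by omega)
    have e2 : cidx m b j (swapAdj σ c) i = cidx m b j σ i := swap_cidx_le_c i (by omega)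
    rw [e1, e2]
    exact cidx_succ_lt hb hnd (by omega)
  · rcases Nat.eq_or_lt_of_le h1 with h2 | h2
    · have hic : i = c := h2.symm
      subst hic
      rw [swap_cidx_c1, swap_cidx_le_c i le_rfl]
      apply bstep_lt hb
      exact mset_subset hb hreg hnd (Nat.le_succ i) (by omega) (letter_mem hb hnd (by omega))
    · rcases Nat.eq_or_lt_of_le h2 with h3 | h3
      · rw [← h3]
        show cidx m b j (swapAdj σ c) (c+2) < cidx m b j (swapAdj σ c) (c+1)
        show b (m (cidx m b j (swapAdj σ c) (c+1)) +
          Finsupp.single (swapAdj σ c (c+1)) 1) < cidx m b j (swapAdj σ c) (c+1)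
        rw [swap_apply_c1]
        exact bstep_lt hb hin
      · rw [swap_cidx_ge hmin hlq hb hreg (i+1) (by omega),
            swap_cidx_ge hmin hlq hb hreg i (by omega)]
        exact cidx_succ_lt hb hnd hip

lemma strictAnti_range_eq {γ : Type*} [LinearOrder γ] {N : ℕ} {f g : Fin N → γ}
    (hf : StrictAnti f) (hg : StrictAnti g) (h : Set.range f = Set.range g) :
    ∀ x, f x = g x := by
  have hf' : StrictMono (fun x => OrderDual.toDual (f x)) := fun a b hab => hf hab
  have hg' : StrictMono (fun x => OrderDual.toDual (g x)) := fun a b hab => hg hab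
  have hr : Set.range (fun x => OrderDual.toDual (f x)) =
      Set.range (fun x => OrderDual.toDual (g x)) := by
    rw [show (fun x => OrderDual.toDual (f x)) = (⇑OrderDual.toDual ∘ f) from rfl,
        show (fun x => OrderDual.toDual (g x)) = (⇑OrderDual.toDual ∘ g) from rfl,
        Set.range_comp, Set.range_comp, h]
  intro x
  exact OrderDual.toDual.injective (strictMono_range_eq hf' hg' hr x)

lemma range_skip {p ii : ℕ} (hii : ii ≤ p) :
    Set.range (fun rr : Fin p => (if rr.val < ii then rr.val else rr.val + 1)) =
      Set.Iic p \ {ii} := by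
  ext x
  simp only [Set.mem_range, Set.mem_diff, Set.mem_Iic, Set.mem_singleton_iff]
  constructor
  · rintro ⟨rr, rfl⟩
    have := rr.isLt
    split_ifs <;> constructor <;> omega
  · rintro ⟨hxp, hxne⟩
    rcases Nat.lt_or_ge x ii with h | h
    · refine ⟨⟨x, by omega⟩, ?_⟩
      show (if x < ii then x else x + 1) = x
      rw [if_pos h]
    · refine ⟨⟨x - 1, by omega⟩, ?_⟩
      show (if x - 1 < ii then x - 1 else x - 1 + 1) = x
      rw [if_neg (by omega)]
      omega

include hmin hb in
lemma ident (hndσ : Nondeg m b (m j) σ p) (hndτ : Nondeg m b (m j) τ p)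
    {i₀ iσ : ℕ} (hi₀ : i₀ ≤ p) (hiσ : iσ ≤ p)
    (hfeq : vertSet m b (m j) τ p \ {chainSeq m b (m j) τ i₀} =
      vertSet m b (m j) σ p \ {chainSeq m b (m j) σ iσ}) :
    ∀ r, r < p → chainSeq m b (m j) τ (if r < i₀ then r else r + 1) =
      chainSeq m b (m j) σ (if r < iσ then r else r + 1) := by
  have himg : chainSeq m b (m j) τ '' (Set.Iic p \ {i₀}) =
      chainSeq m b (m j) σ '' (Set.Iic p \ {iσ}) := by
    rw [← facet_eq_image hndτ hi₀, ← facet_eq_image hndσ hiσ]; exact hfeq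
  have hc1 : (fun rr : Fin p => chainSeq m b (m j) τ (if rr.val < i₀ then rr.val else rr.val + 1)) =
      (chainSeq m b (m j) τ) ∘ (fun rr : Fin p => if rr.val < i₀ then rr.val else rr.val + 1) := rfl
  have hc2 : (fun rr : Fin p => chainSeq m b (m j) σ (if rr.val < iσ then rr.val else rr.val + 1)) =
      (chainSeq m b (m j) σ) ∘ (fun rr : Fin p => if rr.val < iσ then rr.val else rr.val + 1) := rfl
  have hidx : Set.range (fun rr : Fin p => cidx m b j τ (if rr.val < i₀ then rr.val else rr.val + 1)) =
      Set.range (fun rr : Fin p => cidx m b j σ (if rr.val < iσ then rr.val else rr.val + 1)) := by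
    apply Set.image_injective.mpr (m_inj hmin)
    have hm1 : Set.range (fun rr : Fin p =>
          chainSeq m b (m j) τ (if rr.val < i₀ then rr.val else rr.val + 1)) =
        m '' Set.range (fun rr : Fin p =>
          cidx m b j τ (if rr.val < i₀ then rr.val else rr.val + 1)) := by
      rw [show (fun rr : Fin p =>
          chainSeq m b (m j) τ (if rr.val < i₀ then rr.val else rr.val + 1)) =
          m ∘ (fun rr : Fin p => cidx m b j τ (if rr.val < i₀ then rr.val else rr.val + 1))
          from funext fun rr => chainSeq_cidx _, Set.range_comp]
    have hm2 : Set.range (fun rr : Fin p =>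
          chainSeq m b (m j) σ (if rr.val < iσ then rr.val else rr.val + 1)) =
        m '' Set.range (fun rr : Fin p =>
          cidx m b j σ (if rr.val < iσ then rr.val else rr.val + 1)) := by
      rw [show (fun rr : Fin p =>
          chainSeq m b (m j) σ (if rr.val < iσ then rr.val else rr.val + 1)) =
          m ∘ (fun rr : Fin p => cidx m b j σ (if rr.val < iσ then rr.val else rr.val + 1))
          from funext fun rr => chainSeq_cidx _, Set.range_comp]
    rw [← hm1, ← hm2, hc1, hc2, Set.range_comp, Set.range_comp, range_skip hi₀, range_skip hiσ]
    exact himg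
  have hmono1 : StrictAnti (fun rr : Fin p =>
      cidx m b j τ (if rr.val < i₀ then rr.val else rr.val + 1)) := by
    intro x y hxy
    have hxy' : x.val < y.val := hxy
    apply cidx_lt_of_lt hb hndτ
    · split_ifs <;> omega
    · have := y.isLt; split_ifs <;> omega
  have hmono2 : StrictAnti (fun rr : Fin p =>
      cidx m b j σ (if rr.val < iσ then rr.val else rr.val + 1)) := by
    intro x y hxy
    have hxy' : x.val < y.val := hxy
    apply cidx_lt_of_lt hb hndσ
    · split_ifs <;> omega
    · have := y.isLt; split_ifs <;> omega
  intro r hr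
  have := strictAnti_range_eq hmono1 hmono2 hidx ⟨r, hr⟩
  rw [chainSeq_cidx, chainSeq_cidx]
  exact congrArg m this

end Swap

section Counting

variable (hmin : MinimalGens m) (hlq : HasLinearQuotients K m)
  (hb : IsDecompositionFunction K m b) (hreg : IsRegularDecomp K m b)
  {j : Fin k} {σ τ : ℕ → Fin n} {p c : ℕ} {α : Finset (Fin n)}

lemma two_missing (hτp : PermOf τ p α) (hσp : PermOf σ p α) {i m₁ m₂ : ℕ}
    (hi : i < p)
    (hknown : ∀ a, a < p → a ≠ m₁ → a ≠ m₂ → ∃ i', i' < p ∧ i' ≠ i ∧ τ i' = σ a) :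
    τ i = σ m₁ ∨ τ i = σ m₂ := by
  have hmem : τ i ∈ α := (hτp.2 _).mpr ⟨i, hi, rfl⟩
  obtain ⟨a, ha, haeq⟩ := (hσp.2 _).mp hmem
  by_cases h1 : a = m₁
  · subst h1; exact Or.inl haeq.symm
  by_cases h2 : a = m₂
  · subst h2; exact Or.inr haeq.symm
  obtain ⟨i', hi'p, hi'ne, hi'eq⟩ := hknown a ha h1 h2
  exact absurd (hτp.1 (Set.mem_Iio.mpr hi'p) (Set.mem_Iio.mpr hi) (hi'eq.trans haeq))
    hi'ne

lemma one_missing (hτp : PermOf τ p α) (hσp : PermOf σ p α) {i m₁ : ℕ}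
    (hi : i < p)
    (hknown : ∀ a, a < p → a ≠ m₁ → ∃ i', i' < p ∧ i' ≠ i ∧ τ i' = σ a) :
    τ i = σ m₁ := by
  rcases two_missing hτp hσp hi (m₂ := m₁) (fun a ha h1 _ => hknown a ha h1) with h | h
    <;> exact h

omit [Field K] in
include hmin in
lemma chain_ne (hnd : Nondeg m b (m j) σ p) {x y : ℕ} (hx : x ≤ p) (hy : y ≤ p)
    (hxy : x ≠ y) : chainSeq m b (m j) σ x ≠ chainSeq m b (m j) σ y :=
  fun h => hxy (hnd (Set.mem_Iic.mpr hx) (Set.mem_Iic.mpr hy) h)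

include hmin hb in
lemma jump_letter (hnd : Nondeg m b (m j) σ p) (hc : c + 1 < p) {x : ℕ}
    (h0 : chainSeq m b (m j) τ x = chainSeq m b (m j) σ c)
    (h1 : chainSeq m b (m j) τ (x+1) = chainSeq m b (m j) σ (c+2)) :
    τ x = σ (c+1) ∧
      b (m (cidx m b j σ c) + Finsupp.single (σ (c+1)) 1) = cidx m b j σ (c+2) := by
  have hg : cidx m b j τ x = cidx m b j σ c := cidx_eq_of_chain_eq hmin h0
  have hstep : chainSeq m b (m j) σ (c+2) =
      m (b (m (cidx m b j σ c) + Finsupp.single (τ x) 1)) := by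
    rw [← h1, chain_succ, chainSeq_cidx, hg]
  have hne22 : chainSeq m b (m j) σ (c+2) ≠ m (cidx m b j σ c) := by
    rw [← chainSeq_cidx (m := m) (b := b) (j := j) (σ := σ) c]
    exact chain_ne hmin hnd (by omega) (by omega) (by omega)
  have hexc : m (cidx m b j σ c) (τ x) < chainSeq m b (m j) σ (c+2) (τ x) := by
    conv_rhs => rw [hstep]
    exact exceed_at_letter hmin hb (by rw [← hstep]; exact hne22)
  have hb1 := Finsupp.le_def.mp (chain_step_le (j := j) hb σ (c+1)) (τ x)
  have hb2 := Finsupp.le_def.mp (chain_step_le (j := j) hb σ c) (τ x)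
  rw [Finsupp.add_apply, Finsupp.single_apply] at hb1 hb2
  rw [show c + 1 + 1 = c + 2 by omega] at hb1
  have hcc : (m (cidx m b j σ c)) (τ x) = (chainSeq m b (m j) σ c) (τ x) := by
    rw [chainSeq_cidx]
  have hor : τ x = σ (c+1) := by
    by_cases hss : σ (c+1) = τ x
    · exact hss.symm
    · rw [if_neg hss] at hb1
      by_cases hsc : σ c = τ x
      · exfalso
        have hh : chainSeq m b (m j) σ (c+2) = chainSeq m b (m j) σ (c+1) := by
          rw [hstep, ← hsc, chain_succ, chainSeq_cidx]
        exact chain_ne hmin hnd (by omega) (by omega) (by omega) hh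
      · rw [if_neg hsc] at hb2
        omega
  refine ⟨hor, ?_⟩
  apply m_inj hmin
  have h2 := hstep
  rw [hor] at h2
  rw [chainSeq_cidx] at h2
  exact h2.symm

end Counting

section Master

variable (hmin : MinimalGens m) (hlq : HasLinearQuotients K m)
  (hb : IsDecompositionFunction K m b) (hreg : IsRegularDecomp K m b)
  {j : Fin k} {σ τ : ℕ → Fin n} {p c : ℕ} {α : Finset (Fin n)}

include hmin hlq hb hreg in
lemma master (hσp : PermOf σ p α) (hnd : Nondeg m b (m j) σ p) (hc : c + 1 < p)
    (hτp : PermOf τ p α) (hτn : Nondeg m b (m j) τ p)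
    {i₀ : ℕ} (hi₀ : i₀ ≤ p)
    (hfeq : vertSet m b (m j) τ p \ {chainSeq m b (m j) τ (i₀)} = vertSet m b (m j) σ p \ {chainSeq m b (m j) σ (c+1)}) :
    (∀ i, i ≤ p → chainSeq m b (m j) τ (i) = chainSeq m b (m j) σ (i)) ∨
    (σ c ∈ mset K m (b (m (cidx m b j σ (c)) + Finsupp.single (σ (c+1)) 1)) ∧
      ∀ i, i ≤ p → chainSeq m b (m j) τ (i) = chainSeq m b (m j) (swapAdj σ c) i) := by
  have Hid := ident hmin hb hnd hτn hi₀ (show c+1 ≤ p by omega) hfeq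
  rcases Nat.eq_zero_or_pos i₀ with rfl | hi₀pos
  · exfalso
    have h0 := Hid 0 (by omega)
    rw [if_neg (by omega), if_pos (by omega)] at h0
    have h0' : chainSeq m b (m j) τ (0+1) = chainSeq m b (m j) τ 0 := h0
    exact chain_ne hmin hτn (by omega) (by omega) (by omega) h0'
  rcases Nat.lt_or_ge i₀ (c+1) with hAcase | hBC
  · -- CASE A : 1 ≤ i₀ ≤ c
    exfalso
    have idA1 : ∀ i, i < i₀ → chainSeq m b (m j) τ (i) = chainSeq m b (m j) σ (i) := by
      intro i hi
      have := Hid i (by omega); rwa [if_pos hi, if_pos (by omega)] at this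
    have idA2 : ∀ r, i₀ ≤ r → r ≤ c → chainSeq m b (m j) τ (r+1) = chainSeq m b (m j) σ (r) := by
      intro r h1 h2
      have := Hid r (by omega); rwa [if_neg (by omega), if_pos (by omega)] at this
    have idA3 : ∀ r, c+1 ≤ r → r < p → chainSeq m b (m j) τ (r+1) = chainSeq m b (m j) σ (r+1) := by
      intro r h1 h2
      have := Hid r (by omega); rwa [if_neg (by omega), if_neg (by omega)] at this
    have ltrA1 : ∀ a, a + 1 < i₀ → τ a = σ a := fun a ha =>
      pair_letter hmin hb hnd (by omega) (idA1 a (by omega)) (idA1 (a+1) (by omega))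
    have ltrA2 : ∀ r, i₀ ≤ r → r + 1 ≤ c → τ (r+1) = σ r := fun r h1 h2 =>
      pair_letter hmin hb hnd (by omega) (idA2 r h1 (by omega)) (idA2 (r+1) (by omega) h2)
    have ltrA3 : ∀ r, c+1 ≤ r → r + 1 < p → τ (r+1) = σ (r+1) := fun r h1 h2 =>
      pair_letter hmin hb hnd (by omega) (idA3 r h1 (by omega)) (idA3 (r+1) (by omega) h2)
    obtain ⟨hτc1, hjump⟩ := jump_letter hmin hb hnd hc (x := c+1)
      (idA2 c (by omega) le_rfl) (idA3 (c+1) le_rfl hc)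
    have hknownA : ∀ a, a < p → a ≠ i₀ - 1 → a ≠ c →
        ∃ i', i' < p ∧ (i' ≠ i₀ - 1 ∧ i' ≠ i₀) ∧ τ i' = σ a := by
      intro a ha h1 h2
      rcases Nat.lt_or_ge (a+1) i₀ with hlt | hge
      · exact ⟨a, by omega, by omega, ltrA1 a hlt⟩
      · rcases Nat.lt_or_ge a (c+1) with hlt2 | hge2
        · exact ⟨a+1, by omega, by omega, ltrA2 a (by omega) (by omega)⟩
        · rcases Nat.eq_or_lt_of_le hge2 with heq | hgt
          · exact ⟨c+1, by omega, by omega, by rw [hτc1]; exact congrArg σ (by omega)⟩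
          · refine ⟨a, by omega, by omega, ?_⟩
            have := ltrA3 (a-1) (by omega) (by omega)
            rwa [show a - 1 + 1 = a by omega] at this
    have hA := two_missing hτp hσp (i := i₀-1) (m₁ := i₀-1) (m₂ := c) (by omega)
      (fun a ha h1 h2 => by
        obtain ⟨i', h3, h4, h5⟩ := hknownA a ha h1 h2
        exact ⟨i', h3, h4.1, h5⟩)
    rcases hA with hA | hA
    · have h1 : chainSeq m b (m j) τ (i₀-1) = chainSeq m b (m j) σ (i₀-1) := idA1 (i₀-1) (by omega)
      have h2 := pair_next h1 hA
      rw [show i₀-1+1 = i₀ by omega] at h2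
      have h3 : chainSeq m b (m j) τ (i₀+1) = chainSeq m b (m j) σ (i₀) := idA2 i₀ le_rfl (by omega)
      exact chain_ne hmin hτn (x := i₀+1) (y := i₀) (by omega) (by omega) (by omega)
        (h2.trans h3.symm).symm
    · have hA3 : τ i₀ = σ (i₀-1) ∨ τ i₀ = σ c := two_missing hτp hσp (i := i₀) (by omega)
        (fun a ha h1 h2 => by
          obtain ⟨i', h3, h4, h5⟩ := hknownA a ha h1 h2
          exact ⟨i', h3, h4.2, h5⟩)
      have hτi₀ : τ i₀ = σ (i₀-1) := by
        rcases hA3 with h | h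
        · exact h
        · exfalso
          have : (i₀ - 1 : ℕ) = i₀ := hτp.1 (Set.mem_Iio.mpr (by omega))
            (Set.mem_Iio.mpr (by omega)) (hA.trans h.symm)
          omega
      have hy : chainSeq m b (m j) τ (i₀) = m (b (m (cidx m b j σ (i₀-1)) + Finsupp.single (σ c) 1)) := by
        have h1 : chainSeq m b (m j) τ (i₀-1) = chainSeq m b (m j) σ (i₀-1) := idA1 (i₀-1) (by omega)
        have h2 := chain_succ (m := m) (m0 := m j) (b := b) τ (i₀-1)
        rw [show i₀-1+1 = i₀ by omega] at h2
        rw [h2, h1, hA, chainSeq_cidx]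
      have hnext := chain_succ (m := m) (m0 := m j) (b := b) τ i₀
      have hnext2 : chainSeq m b (m j) τ (i₀+1) = chainSeq m b (m j) σ (i₀) := idA2 i₀ le_rfl (by omega)
      have hK := key_comm_gen hmin hlq hb hreg (cidx m b j σ (i₀-1)) (σ (i₀-1)) (σ c)
      have hL : m (b (m (b (m (cidx m b j σ (i₀-1)) + Finsupp.single (σ c) 1)) + Finsupp.single (σ (i₀-1)) 1)) = chainSeq m b (m j) σ (i₀) := by
        rw [← hy, ← hτi₀, ← hnext]
        exact hnext2
      have hR : m (b (m (b (m (cidx m b j σ (i₀-1)) + Finsupp.single (σ (i₀-1)) 1)) + Finsupp.single (σ c) 1)) = chainSeq m b (m j) σ (i₀) := by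
        rw [← hK]; exact hL
      have hg2 : b (m (cidx m b j σ (i₀-1)) + Finsupp.single (σ (i₀-1)) 1) = cidx m b j σ (i₀) := by
        conv_rhs => rw [show i₀ = i₀-1+1 by omega]
        rfl
      rw [hg2] at hR
      have hfix : m (b (m (cidx m b j σ (i₀)) + Finsupp.single (σ c) 1)) = m (cidx m b j σ (i₀)) := by
        rw [hR]; exact chainSeq_cidx i₀
      exact (not_mem_of_fix hmin hb hfix)
        (mset_subset hb hreg hnd (show i₀ ≤ c by omega) (by omega)
          (letter_mem hb hnd (show c < p by omega)))
  · rcases Nat.eq_or_lt_of_le hBC with hBcase | hCcase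
    · -- CASE B : i₀ = c+1
      have hi₀c : i₀ = c + 1 := hBcase.symm
      have idB : ∀ i, i ≤ p → i ≠ c+1 → chainSeq m b (m j) τ (i) = chainSeq m b (m j) σ (i) := by
        intro i hip hne
        rcases Nat.lt_or_ge i (c+1) with h | h
        · have := Hid i (by omega); rwa [if_pos (by omega), if_pos (by omega)] at this
        · have := Hid (i-1) (by omega)
          rw [if_neg (by omega), if_neg (by omega), show i-1+1 = i by omega] at this
          exact this
      have ltrB1 : ∀ a, a+1 ≤ c → τ a = σ a := fun a ha =>
        pair_letter hmin hb hnd (by omega) (idB a (by omega) (by omega))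
          (idB (a+1) (by omega) (by omega))
      have ltrB3 : ∀ a, c+2 ≤ a → a+1 ≤ p → τ a = σ a := fun a h1 h2 =>
        pair_letter hmin hb hnd (by omega) (idB a (by omega) (by omega))
          (idB (a+1) (by omega) (by omega))
      have hknownB : ∀ a, a < p → a ≠ c → a ≠ c+1 →
          ∃ i', i' < p ∧ (i' ≠ c ∧ i' ≠ c+1) ∧ τ i' = σ a := by
        intro a ha h1 h2
        rcases Nat.lt_or_ge a (c+1) with h | h
        · exact ⟨a, by omega, by omega, ltrB1 a (by omega)⟩
        · exact ⟨a, by omega, by omega, ltrB3 a (by omega) (by omega)⟩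
      have hB := two_missing hτp hσp (i := c) (m₁ := c) (m₂ := c+1) (by omega)
        (fun a ha h1 h2 => by
          obtain ⟨i', h3, h4, h5⟩ := hknownB a ha h1 h2
          exact ⟨i', h3, h4.1, h5⟩)
      rcases hB with hB | hB
      · left
        intro i hip
        rcases eq_or_ne i (c+1) with rfl | hne
        · exact pair_next (idB c (by omega) (by omega)) hB
        · exact idB i hip hne
      · right
        have h0 : chainSeq m b (m j) τ (c) = chainSeq m b (m j) σ (c) := idB c (by omega) (by omega)
        have hC1 : chainSeq m b (m j) τ (c+1) = m (b (m (cidx m b j σ (c)) + Finsupp.single (σ (c+1)) 1)) := by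
          rw [chain_succ, h0, hB, chainSeq_cidx]
        have hτc1' : τ (c+1) = σ c := by
          have h2m := two_missing hτp hσp (i := c+1) (m₁ := c) (m₂ := c+1) (by omega)
            (fun a ha h1 h2 => by
              obtain ⟨i', h3, h4, h5⟩ := hknownB a ha h1 h2
              exact ⟨i', h3, h4.2, h5⟩)
          rcases h2m with h | h
          · exact h
          · exfalso
            exact (show (c:ℕ) ≠ c+1 by omega) (hτp.1 (Set.mem_Iio.mpr (by omega))
              (Set.mem_Iio.mpr (by omega)) (hB.trans h.symm))
        have hSmem : σ c ∈ mset K m (cidx m b j τ (c+1)) := by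
          rw [← hτc1']
          exact letter_mem hb hτn hc
        have hidxeq : cidx m b j τ (c+1) = b (m (cidx m b j σ (c)) + Finsupp.single (σ (c+1)) 1) := by
          show b (m (cidx m b j τ (c)) + Finsupp.single (τ c) 1) = _
          rw [cidx_eq_of_chain_eq hmin h0, hB]
        rw [hidxeq] at hSmem
        refine ⟨hSmem, ?_⟩
        intro i hip
        rcases eq_or_ne i (c+1) with rfl | hne
        · rw [hC1, chainSeq_cidx, swap_cidx_c1]
        · rw [idB i hip hne]
          exact (swap_chain_eq hmin hlq hb hreg hne).symm
    · -- CASE C : c+2 ≤ i₀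
      exfalso
      have idC1 : ∀ i, i ≤ c → chainSeq m b (m j) τ (i) = chainSeq m b (m j) σ (i) := by
        intro i hi
        have := Hid i (by omega); rwa [if_pos (by omega), if_pos (by omega)] at this
      have idC2 : ∀ r, c+1 ≤ r → r ≤ i₀ - 1 → chainSeq m b (m j) τ (r) = chainSeq m b (m j) σ (r+1) := by
        intro r h1 h2
        have := Hid r (by omega); rwa [if_pos (by omega), if_neg (by omega)] at this
      have idC3 : ∀ i, i₀ + 1 ≤ i → i ≤ p → chainSeq m b (m j) τ (i) = chainSeq m b (m j) σ (i) := by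
        intro i h1 h2
        have := Hid (i-1) (by omega)
        rw [if_neg (by omega), if_neg (by omega), show i-1+1 = i by omega] at this
        exact this
      have ltrC1 : ∀ a, a+1 ≤ c → τ a = σ a := fun a ha =>
        pair_letter hmin hb hnd (by omega) (idC1 a (by omega)) (idC1 (a+1) (by omega))
      have ltrC2 : ∀ r, c+1 ≤ r → r+1 ≤ i₀-1 → τ r = σ (r+1) := fun r h1 h2 =>
        pair_letter hmin hb hnd (by omega) (idC2 r h1 (by omega)) (idC2 (r+1) (by omega) h2)
      have ltrC3 : ∀ a, i₀+1 ≤ a → a+1 ≤ p → τ a = σ a := fun a h1 h2 =>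
        pair_letter hmin hb hnd (by omega) (idC3 a h1 (by omega)) (idC3 (a+1) (by omega) h2)
      obtain ⟨hτc, hjump⟩ := jump_letter hmin hb hnd hc (x := c)
        (idC1 c le_rfl) (idC2 (c+1) le_rfl (by omega))
      have hS2 : σ c ∈ mset K m (cidx m b j σ (c+2)) := by
        rcases Nat.eq_or_lt_of_le hi₀ with hip | hip
        · have hlast : τ (i₀-1) = σ c := by
            apply one_missing hτp hσp (i := i₀-1) (m₁ := c) (by omega)
            intro a ha h1
            rcases Nat.lt_or_ge a c with h2 | h2
            · exact ⟨a, by omega, by omega, ltrC1 a (by omega)⟩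
            · rcases Nat.eq_or_lt_of_le h2 with h3 | h3
              · omega
              · rcases Nat.eq_or_lt_of_le h3 with h4 | h4
                · exact ⟨c, by omega, by omega, by rw [hτc]; exact congrArg σ (by omega)⟩
                · refine ⟨a-1, by omega, by omega, ?_⟩
                  have := ltrC2 (a-1) (by omega) (by omega)
                  rwa [show a-1+1 = a by omega] at this
          have hmm := letter_mem hb hτn (show i₀-1 < p by omega)
          rw [hlast] at hmm
          have hidx : cidx m b j τ (i₀-1) = cidx m b j σ (i₀) := by
            apply cidx_eq_of_chain_eq hmin
            have := idC2 (i₀-1) (by omega) (by omega)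
            rwa [show i₀-1+1 = i₀ by omega] at this
          rw [hidx] at hmm
          exact mset_subset hb hreg hnd (by omega) (by omega) hmm
        · have hCc := two_missing hτp hσp (i := i₀-1) (m₁ := c) (m₂ := i₀) (by omega)
            (by
              intro a ha h1 h2
              rcases Nat.lt_or_ge a c with h3 | h3
              · exact ⟨a, by omega, by omega, ltrC1 a (by omega)⟩
              · rcases Nat.eq_or_lt_of_le h3 with h4 | h4
                · omega
                · rcases Nat.eq_or_lt_of_le h4 with h5 | h5
                  · exact ⟨c, by omega, by omega, by rw [hτc]; exact congrArg σ (by omega)⟩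
                  · rcases Nat.lt_or_ge a i₀ with h6 | h6
                    · refine ⟨a-1, by omega, by omega, ?_⟩
                      have := ltrC2 (a-1) (by omega) (by omega)
                      rwa [show a-1+1 = a by omega] at this
                    · exact ⟨a, by omega, by omega, ltrC3 a (by omega) (by omega)⟩)
          rcases hCc with hCc | hCc
          · have hmm := letter_mem hb hτn (show i₀-1 < p by omega)
            rw [hCc] at hmm
            have hidx : cidx m b j τ (i₀-1) = cidx m b j σ (i₀) := by
              apply cidx_eq_of_chain_eq hmin
              have := idC2 (i₀-1) (by omega) (le_refl _)
              rwa [show i₀-1+1 = i₀ by omega] at this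
            rw [hidx] at hmm
            exact mset_subset hb hreg hnd (by omega) (by omega) hmm
          · have h1 : chainSeq m b (m j) τ (i₀-1) = chainSeq m b (m j) σ (i₀) := by
              have := idC2 (i₀-1) (by omega) (le_refl _)
              rwa [show i₀-1+1 = i₀ by omega] at this
            have h2 : chainSeq m b (m j) τ (i₀-1+1) = chainSeq m b (m j) σ (i₀+1) := by
              rw [chain_succ, h1, hCc]
              exact (chain_succ (m := m) (m0 := m j) (b := b) σ i₀).symm
            rw [show i₀-1+1 = i₀ by omega] at h2
            have h3 : chainSeq m b (m j) τ (i₀+1) = chainSeq m b (m j) σ (i₀+1) := idC3 (i₀+1) le_rfl (by omega)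
            exact absurd (h2.trans h3.symm).symm
              (chain_ne hmin hτn (x := i₀+1) (y := i₀) (by omega) (by omega) (by omega))
      have hK := key_comm_gen hmin hlq hb hreg (cidx m b j σ (c)) (σ c) (σ (c+1))
      have hL : b (m (cidx m b j σ (c+2)) + Finsupp.single (σ c) 1) = cidx m b j σ (c+2) := by
        calc b (m (cidx m b j σ (c+2)) + Finsupp.single (σ c) 1)
            = b (m (b (m (cidx m b j σ (c)) + Finsupp.single (σ (c+1)) 1)) + Finsupp.single (σ c) 1) := by rw [hjump]
          _ = b (m (b (m (cidx m b j σ (c)) + Finsupp.single (σ c) 1)) + Finsupp.single (σ (c+1)) 1) := hK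
          _ = cidx m b j σ (c+2) := rfl
      exact absurd hL (ne_of_lt (bstep_lt hb hS2))

end Master

end Stmt5Aux


open Stmt5Aux in
/-- Let `F` be the facet of the nondegenerate simplex `ch(m,α,σ)` obtained
by omitting the vertex `m_ℓ` (`1 ≤ ℓ ≤ p-1`; 0-based, `ℓ = c+1` with `c+1 < p`).
(a) If `σ_ℓ ∈ set(b(x_{σ_{ℓ+1}}·m_{ℓ-1}))` then `F` is interior: it is also a facet of
the nondegenerate simplex `ch(m,α,σ')` where `σ'` swaps positions `ℓ, ℓ+1` of `σ`, and
these are the only two nondegenerate simplices `ch(m,α,τ)` containing `F` as a facet.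
(b) If `σ_ℓ ∉ set(b(x_{σ_{ℓ+1}}·m_{ℓ-1}))` then `F` is exterior: `ch(m,α,σ)` is the
only nondegenerate simplex of the form `ch(m,α,τ)` containing `F` as a facet. -/
theorem stmt5 (K : Type*) [Field K] {n k : ℕ} (m : Fin k → (Fin n →₀ ℕ))
    (hmin : MinimalGens m) (hlq : HasLinearQuotients K m)
    (b : (Fin n →₀ ℕ) → Fin k) (hb : IsDecompositionFunction K m b)
    (hreg : IsRegularDecomp K m b)
    (j : Fin k) (α : Finset (Fin n)) (hα : ↑α ⊆ mset K m j)
    (p : ℕ) (hcard : α.card = p)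
    (σ : ℕ → Fin n) (hσ : PermOf σ p α)
    (hnd : Nondeg m b (m j) σ p)
    (c : ℕ) (hc : c + 1 < p)
    (F : Set (Fin n →₀ ℕ))
    (hF : F = vertSet m b (m j) σ p \ {chainSeq m b (m j) σ (c + 1)}) :
    (σ c ∈ mset K m (b (chainSeq m b (m j) σ c + Finsupp.single (σ (c + 1)) 1)) →
      (PermOf (swapAdj σ c) p α ∧ Nondeg m b (m j) (swapAdj σ c) p ∧
        IsFacetOf m b (m j) (swapAdj σ c) p F ∧
        ∀ τ : ℕ → Fin n, PermOf τ p α → Nondeg m b (m j) τ p →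
          IsFacetOf m b (m j) τ p F →
          (vertSet m b (m j) τ p = vertSet m b (m j) σ p ∨
            vertSet m b (m j) τ p = vertSet m b (m j) (swapAdj σ c) p))) ∧
    (σ c ∉ mset K m (b (chainSeq m b (m j) σ c + Finsupp.single (σ (c + 1)) 1)) →
      ∀ τ : ℕ → Fin n, PermOf τ p α → Nondeg m b (m j) τ p →
        IsFacetOf m b (m j) τ p F →
        vertSet m b (m j) τ p = vertSet m b (m j) σ p) := by
  have hnd' := hnd
  constructor
  · intro hin
    have hin' : σ c ∈ mset K m (cidx m b j (swapAdj σ c) (c+1)) := by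
      rw [swap_cidx_c1]
      rwa [chainSeq_cidx (m := m) (b := b) (j := j) (σ := σ) c] at hin
    refine ⟨permof_swap hσ hc, nondeg_swap hmin hlq hb hreg hnd hc hin', ?_, ?_⟩
    · refine ⟨c+1, by omega, ?_⟩
      rw [hF, facet_eq_image hnd (by omega : c+1 ≤ p),
        facet_eq_image (nondeg_swap hmin hlq hb hreg hnd hc hin') (by omega : c+1 ≤ p)]
      exact Set.image_congr (fun a ha =>
        (swap_chain_eq hmin hlq hb hreg (fun h => ha.2 h)).symm)
    · intro τ hτp hτn hτf
      obtain ⟨i₀, hi₀, hFτ⟩ := hτf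
      have hfeq := hFτ.symm.trans hF
      rcases master hmin hlq hb hreg hσ hnd hc hτp hτn hi₀ hfeq with hL | ⟨_, hR⟩
      · left
        rw [vertSet_eq_image, vertSet_eq_image]
        exact Set.image_congr (fun i hi => hL i (Set.mem_Iic.mp hi))
      · right
        rw [vertSet_eq_image, vertSet_eq_image]
        exact Set.image_congr (fun i hi => hR i (Set.mem_Iic.mp hi))
  · intro hout τ hτp hτn hτf
    obtain ⟨i₀, hi₀, hFτ⟩ := hτf
    have hfeq := hFτ.symm.trans hF
    rcases master hmin hlq hb hreg hσ hnd hc hτp hτn hi₀ hfeq with hL | ⟨hS, _⟩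
    · rw [vertSet_eq_image, vertSet_eq_image]
      exact Set.image_congr (fun i hi => hL i (Set.mem_Iic.mp hi))
    · exact absurd (by
        rw [chainSeq_cidx (m := m) (b := b) (j := j) (σ := σ) c]
        exact hS) hout
end
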